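/- Let P be a probability measure on ℝ² (with coordinates (x, y)) such that X and Y are square-integrable, and let (x̃, ỹ) ∈ ℝ². For t ∈ [0,1] let P_t = t·δ_{(x̃,ỹ)} + (1−t)·P and let c(t) = E_{P_t}(XY) − E_{P_t}(X)·E_{P_t}(Y) be the covariance under P_t. Then c is differentiable at t = 0 with c'(0) = (ỹ − E_P(Y))(x̃ − E_P(X)) − c(0). In particular, the covariance Ψ(P) = Cov_P(X,Y) has efficient influence function (Y − E_P(Y))(X − E_P(X)) − Ψ(P). -/

import Mathlib

open MeasureTheory Set

lemma mix_integral (P : Measure (ℝ × ℝ)) [IsProbabilityMeasure P] {f : ℝ × ℝ → ℝ}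
    (hf : Integrable f P) (hfc : Continuous f) {t : ℝ} (ht0 : 0 ≤ t) (ht1 : t ≤ 1)
    (a : ℝ × ℝ) :
    ∫ p, f p ∂(ENNReal.ofReal t • Measure.dirac a + ENNReal.ofReal (1 - t) • P)
      = t * f a + (1 - t) * ∫ p, f p ∂P := by
  have hd0 : Integrable f (Measure.dirac a) := by
    refine ⟨hfc.aestronglyMeasurable, ?_⟩
    rw [HasFiniteIntegral, lintegral_dirac]
    exact ENNReal.coe_lt_top
  have hd : Integrable f (ENNReal.ofReal t • Measure.dirac a) :=
    hd0.smul_measure ENNReal.ofReal_ne_top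
  have hp : Integrable f (ENNReal.ofReal (1 - t) • P) :=
    hf.smul_measure ENNReal.ofReal_ne_top
  rw [integral_add_measure hd hp, integral_smul_measure, integral_smul_measure,
    integral_dirac, ENNReal.toReal_ofReal ht0, ENNReal.toReal_ofReal (by linarith)]
  simp [smul_eq_mul]

theorem stmt_3 (P : Measure (ℝ × ℝ)) [IsProbabilityMeasure P]
    (hX : MemLp (fun p : ℝ × ℝ => p.1) 2 P)
    (hY : MemLp (fun p : ℝ × ℝ => p.2) 2 P)
    (xtil ytil : ℝ) :
    let Pt : ℝ → Measure (ℝ × ℝ) := fun t =>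
      ENNReal.ofReal t • Measure.dirac (xtil, ytil) + ENNReal.ofReal (1 - t) • P
    let c : ℝ → ℝ := fun t =>
      (∫ p, p.1 * p.2 ∂(Pt t)) - (∫ p, p.1 ∂(Pt t)) * (∫ p, p.2 ∂(Pt t))
    HasDerivWithinAt c
      ((ytil - ∫ p, p.2 ∂P) * (xtil - ∫ p, p.1 ∂P) - c 0) (Icc 0 1) 0 := by
  intro Pt c
  have hX1 : Integrable (fun p : ℝ × ℝ => p.1) P := hX.integrable one_le_two
  have hY1 : Integrable (fun p : ℝ × ℝ => p.2) P := hY.integrable one_le_two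
  have hXY : Integrable (fun p : ℝ × ℝ => p.1 * p.2) P := by
    have hsum : Integrable (fun p : ℝ × ℝ => (p.1 ^ 2 + p.2 ^ 2) / 2) P :=
      (hX.integrable_sq.add hY.integrable_sq).div_const 2
    refine hsum.mono' ((continuous_fst.mul continuous_snd).aestronglyMeasurable) ?_
    filter_upwards with p
    rw [Real.norm_eq_abs]
    rcases abs_cases (p.1 * p.2) with ⟨h, _⟩ | ⟨h, _⟩ <;> nlinarith [sq_nonneg (p.1 - p.2), sq_nonneg (p.1 + p.2)]
  set A := ∫ p, p.1 ∂P with hA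
  set B := ∫ p, p.2 ∂P with hB
  set M := ∫ p, p.1 * p.2 ∂P with hM
  have hc : ∀ t ∈ Icc (0:ℝ) 1, c t =
      (t * (xtil * ytil) + (1 - t) * M)
        - (t * xtil + (1 - t) * A) * (t * ytil + (1 - t) * B) := by
    intro t ht
    simp only [c, Pt]
    rw [mix_integral P hXY (continuous_fst.mul continuous_snd) ht.1 ht.2,
      mix_integral P hX1 continuous_fst ht.1 ht.2,
      mix_integral P hY1 continuous_snd ht.1 ht.2]
  have h0 : c 0 = M - A * B := by
    have := hc 0 (by simp)
    simpa using this
  have hAd : HasDerivAt (fun t : ℝ => t * xtil + (1 - t) * A) (xtil - A) 0 := by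
    have h1 := (hasDerivAt_id (0:ℝ)).mul_const xtil
    have h2 := (((hasDerivAt_const (0:ℝ) (1:ℝ)).sub (hasDerivAt_id 0)).mul_const A)
    refine (h1.add h2).congr_deriv ?_
    ring
  have hBd : HasDerivAt (fun t : ℝ => t * ytil + (1 - t) * B) (ytil - B) 0 := by
    have h1 := (hasDerivAt_id (0:ℝ)).mul_const ytil
    have h2 := (((hasDerivAt_const (0:ℝ) (1:ℝ)).sub (hasDerivAt_id 0)).mul_const B)
    refine (h1.add h2).congr_deriv ?_
    ring
  have hMd : HasDerivAt (fun t : ℝ => t * (xtil * ytil) + (1 - t) * M) (xtil * ytil - M) 0 := by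
    have h1 := (hasDerivAt_id (0:ℝ)).mul_const (xtil * ytil)
    have h2 := (((hasDerivAt_const (0:ℝ) (1:ℝ)).sub (hasDerivAt_id 0)).mul_const M)
    refine (h1.add h2).congr_deriv ?_
    ring
  have hg : HasDerivAt
      (fun t : ℝ => (t * (xtil * ytil) + (1 - t) * M)
        - (t * xtil + (1 - t) * A) * (t * ytil + (1 - t) * B))
      ((ytil - B) * (xtil - A) - c 0) 0 := by
    have := hMd.sub (hAd.mul hBd)
    refine this.congr_deriv ?_
    simp only [h0]
    ring
  exact (hg.hasDerivWithinAt).congr hc (hc 0 (by simp))
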